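/- Let k be an algebraically closed field, r ≥ 1 an integer, and β : {1,…,r} → {0,1} a block function with s_j = #{i : β(i) = j}. Then: (a) a brick for the nodal matrix problem exists if and only if gcd(s₀, s₁) = 1; (b) if gcd(s₀, s₁) = 1, then the determinant is constant on equivalence classes of bricks and induces a bijection from the set of equivalence classes of bricks onto k ∖ {0}. (Via the paper's equivalence of categories, this is Theorem 1.2(i) for the nodal Weierstrass cubic E : y²z = x³ + x²z: simple vector bundles of rank r and degree d exist iff gcd(r,d) = 1 and are classified by their determinant in Pic^d(E) ≅ k*.) -/

import Mathlib

set_option linter.unusedSectionVars false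

open Matrix Finset

namespace NodalAux

variable {k : Type*} [Field k]

section Defs
variable {ι : Type*} [Fintype ι] [DecidableEq ι]

def Adm (β : ι → Fin 2) (S S' : Matrix ι ι k) : Prop :=
  (∀ i j, β i < β j → S i j = 0 ∧ S' i j = 0) ∧
  (∀ i j, β i = β j → S i j = S' i j)

def Brk (β : ι → Fin 2) (M : Matrix ι ι k) : Prop :=
  IsUnit M ∧
    ∀ S S' : Matrix ι ι k, Adm β S S' → S * M = M * S' →
      ∃ c : k, S = c • (1 : Matrix ι ι k) ∧ S' = c • (1 : Matrix ι ι k)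

def Eqv (β : ι → Fin 2) (M M' : Matrix ι ι k) : Prop :=
  ∃ S S' : Matrix ι ι k, Adm β S S' ∧ IsUnit S ∧ IsUnit S' ∧ S * M = M' * S'

def sb (β : ι → Fin 2) (b : Fin 2) : ℕ := (Finset.univ.filter fun i => β i = b).card

def Stmt (k : Type*) [Field k] {ι : Type*} [Fintype ι] [DecidableEq ι] (β : ι → Fin 2) : Prop :=
  ((∃ M : Matrix ι ι k, Brk β M) ↔ Nat.gcd (sb β 0) (sb β 1) = 1) ∧
  (Nat.gcd (sb β 0) (sb β 1) = 1 →
    (∀ M M' : Matrix ι ι k, Brk β M → Brk β M' → M.det = M'.det → Eqv β M M') ∧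
    (∀ c : k, c ≠ 0 → ∃ M : Matrix ι ι k, Brk β M ∧ M.det = c))

end Defs

section Basic
variable {ι : Type*} [Fintype ι] [DecidableEq ι] {β : ι → Fin 2}

lemma fin2_lt {b c : Fin 2} (h : b < c) : b = 0 ∧ c = 1 := by
  revert h; revert b c; decide

lemma fin2_cases (b : Fin 2) : b = 0 ∨ b = 1 := by revert b; decide

lemma fin2_ne0 {b : Fin 2} (h : ¬ b = 0) : b = 1 := by revert h; revert b; decide

lemma Adm.one : Adm β (1 : Matrix ι ι k) 1 := by
  constructor
  · intro i j hij
    have : i ≠ j := by rintro rfl; exact lt_irrefl _ hij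
    simp [Matrix.one_apply, this]
  · intro i j _; rfl

lemma Adm.smul_one (c : k) : Adm β (c • (1 : Matrix ι ι k)) (c • 1) := by
  constructor
  · intro i j hij
    have : i ≠ j := by rintro rfl; exact lt_irrefl _ hij
    simp [Matrix.one_apply, this]
  · intro i j _; rfl

lemma Adm.mul {S₁ S₁' S₂ S₂' : Matrix ι ι k} (h₁ : Adm β S₁ S₁') (h₂ : Adm β S₂ S₂') :
    Adm β (S₁ * S₂) (S₁' * S₂') := by
  obtain ⟨z₁, e₁⟩ := h₁
  obtain ⟨z₂, e₂⟩ := h₂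
  constructor
  · intro i j hij
    constructor <;>
    · rw [Matrix.mul_apply]
      apply Finset.sum_eq_zero
      intro l _
      rcases lt_or_ge (β i) (β l) with h | h
      · simp [(z₁ i l h).1, (z₁ i l h).2]
      · have : β l < β j := lt_of_le_of_lt h hij
        simp [(z₂ l j this).1, (z₂ l j this).2]
  · intro i j hij
    rw [Matrix.mul_apply, Matrix.mul_apply]
    apply Finset.sum_congr rfl
    intro l _
    rcases lt_trichotomy (β i) (β l) with h | h | h
    · simp [(z₁ i l h).1, (z₁ i l h).2]
    · have h' : β l = β j := h ▸ hij
      rw [e₁ i l h, e₂ l j h']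
    · have : β l < β j := hij ▸ h
      simp [(z₂ l j this).1, (z₂ l j this).2]

/-- the admissible pairs form a submodule -/
def admSub (β : ι → Fin 2) : Submodule k (Matrix ι ι k × Matrix ι ι k) where
  carrier := {p | Adm β p.1 p.2}
  add_mem' := by
    rintro ⟨a, a'⟩ ⟨b, b'⟩ ⟨za, ea⟩ ⟨zb, eb⟩
    constructor
    · intro i j hij
      have h1 : a i j = 0 := (za i j hij).1
      have h2 : a' i j = 0 := (za i j hij).2
      have h3 : b i j = 0 := (zb i j hij).1
      have h4 : b' i j = 0 := (zb i j hij).2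
      constructor <;> simp [Matrix.add_apply, h1, h2, h3, h4]
    · intro i j hij
      have h1 : a i j = a' i j := ea i j hij
      have h2 : b i j = b' i j := eb i j hij
      simp [Matrix.add_apply, h1, h2]
  zero_mem' := by
    constructor
    · intro i j _; simp
    · intro i j _; rfl
  smul_mem' := by
    rintro c ⟨a, a'⟩ ⟨za, ea⟩
    constructor
    · intro i j hij
      have h1 : a i j = 0 := (za i j hij).1
      have h2 : a' i j = 0 := (za i j hij).2
      constructor <;> simp [Matrix.smul_apply, h1, h2]
    · intro i j hij
      have h1 : a i j = a' i j := ea i j hij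
      simp [Matrix.smul_apply, h1]

lemma Adm.inv {S S' : Matrix ι ι k} (h : Adm β S S') (hS : IsUnit S) (hS' : IsUnit S') :
    Adm β S⁻¹ S'⁻¹ := by
  classical
  set u : Matrix ι ι k × Matrix ι ι k := (S, S') with hu
  have hmem : ∀ x ∈ admSub (k := k) β, u * x ∈ admSub (k := k) β := by
    rintro ⟨x, x'⟩ hx
    exact Adm.mul h hx
  let L : admSub (k := k) β →ₗ[k] admSub (k := k) β :=
    (LinearMap.mulLeft k u).restrict hmem
  have hinj : Function.Injective L := by
    rintro ⟨x, hx⟩ ⟨y, hy⟩ hxy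
    have : u * x = u * y := congrArg Subtype.val hxy
    have hSd : IsUnit S.det := (Matrix.isUnit_iff_isUnit_det S).mp hS
    have hS'd : IsUnit S'.det := (Matrix.isUnit_iff_isUnit_det S').mp hS'
    have hu' : IsUnit u := by
      rw [isUnit_iff_exists]
      refine ⟨(S⁻¹, S'⁻¹), ?_, ?_⟩
      · rw [hu]
        refine Prod.ext ?_ ?_ <;>
          simp [Matrix.mul_nonsing_inv _ hSd, Matrix.mul_nonsing_inv _ hS'd]
      · rw [hu]
        refine Prod.ext ?_ ?_ <;>
          simp [Matrix.nonsing_inv_mul _ hSd, Matrix.nonsing_inv_mul _ hS'd]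
    ext1
    exact hu'.mul_left_cancel this
  have hsurj : Function.Surjective L := (LinearMap.injective_iff_surjective).mp hinj
  obtain ⟨⟨x, hx⟩, hLx⟩ := hsurj ⟨(1, 1), Adm.one⟩
  have hux : u * x = (1, 1) := congrArg Subtype.val hLx
  have h1 : S * x.1 = 1 := congrArg Prod.fst hux
  have h2 : S' * x.2 = 1 := congrArg Prod.snd hux
  rw [Matrix.inv_eq_right_inv h1, Matrix.inv_eq_right_inv h2]
  exact hx

lemma Adm.det_eq {S S' : Matrix ι ι k} (h : Adm β S S') : S.det = S'.det := by
  classical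
  obtain ⟨z, e⟩ := h
  set b : ι → ℕ := fun i => 1 - (β i : ℕ) with hb
  have hval : ∀ i j, b j < b i → (β i) < (β j) := by
    intro i j hij
    have h1 : (β i : ℕ) < 2 := (β i).is_lt
    have h2 : (β j : ℕ) < 2 := (β j).is_lt
    rw [Fin.lt_def]
    simp only [hb] at hij
    omega
  have hS : S.BlockTriangular b := fun i j hij => (z i j (hval i j hij)).1
  have hS' : S'.BlockTriangular b := fun i j hij => (z i j (hval i j hij)).2
  rw [hS.det, hS'.det]
  apply Finset.prod_congr rfl
  intro a _
  congr 1
  ext ⟨i, hi⟩ ⟨j, hj⟩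
  simp only [Matrix.toSquareBlock_def]
  apply e
  have h1 : (β i : ℕ) < 2 := (β i).is_lt
  have h2 : (β j : ℕ) < 2 := (β j).is_lt
  simp only [hb] at hi hj
  have : (β i : ℕ) = (β j : ℕ) := by omega
  exact Fin.ext this

lemma Eqv.refl (M : Matrix ι ι k) : Eqv β M M :=
  ⟨1, 1, Adm.one, isUnit_one, isUnit_one, by rw [Matrix.one_mul, Matrix.mul_one]⟩

lemma isUnit_inv {S : Matrix ι ι k} (hS : IsUnit S) : IsUnit S⁻¹ :=
  Matrix.isUnit_nonsing_inv_iff.mpr hS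

lemma eq_conj {S S' M M' : Matrix ι ι k} (hS' : IsUnit S'.det) (heq : S * M = M' * S') :
    M' = S * M * S'⁻¹ := by
  calc M' = M' * S' * S'⁻¹ := by
        rw [Matrix.mul_assoc, Matrix.mul_nonsing_inv _ hS', Matrix.mul_one]
    _ = S * M * S'⁻¹ := by rw [heq]

lemma Eqv.symm {M M' : Matrix ι ι k} (h : Eqv β M M') : Eqv β M' M := by
  obtain ⟨S, S', hadm, hS, hS', heq⟩ := h
  refine ⟨S⁻¹, S'⁻¹, hadm.inv hS hS', isUnit_inv hS, isUnit_inv hS', ?_⟩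
  have hSd : IsUnit S.det := (Matrix.isUnit_iff_isUnit_det S).mp hS
  have hS'd : IsUnit S'.det := (Matrix.isUnit_iff_isUnit_det S').mp hS'
  rw [eq_conj hS'd heq, ← Matrix.mul_assoc, ← Matrix.mul_assoc,
    Matrix.nonsing_inv_mul _ hSd, Matrix.one_mul]

lemma Eqv.trans {M₁ M₂ M₃ : Matrix ι ι k} (h : Eqv β M₁ M₂) (h' : Eqv β M₂ M₃) :
    Eqv β M₁ M₃ := by
  obtain ⟨S, S', hadm, hS, hS', heq⟩ := h
  obtain ⟨T, T', hadm', hT, hT', heq'⟩ := h'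
  refine ⟨T * S, T' * S', hadm'.mul hadm, hT.mul hS, hT'.mul hS', ?_⟩
  calc T * S * M₁ = T * (M₂ * S') := by rw [Matrix.mul_assoc, heq]
    _ = (T * M₂) * S' := by rw [Matrix.mul_assoc]
    _ = M₃ * (T' * S') := by rw [heq', Matrix.mul_assoc]

lemma Eqv.det_eq {M M' : Matrix ι ι k} (h : Eqv β M M') : M.det = M'.det := by
  obtain ⟨S, S', hadm, hS, hS', heq⟩ := h
  have h1 : S.det * M.det = M'.det * S'.det := by
    rw [← Matrix.det_mul, ← Matrix.det_mul, heq]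
  rw [hadm.det_eq] at h1
  have hS'd : S'.det ≠ 0 := ((Matrix.isUnit_iff_isUnit_det S').mp hS').ne_zero
  rw [mul_comm] at h1
  exact mul_right_cancel₀ hS'd h1

lemma inv_mul_eq {S S' M M' : Matrix ι ι k} (hS : IsUnit S) (hS' : IsUnit S')
    (heq : S * M = M' * S') : S⁻¹ * M' = M * S'⁻¹ := by
  have hSd : IsUnit S.det := (Matrix.isUnit_iff_isUnit_det S).mp hS
  have hS'd : IsUnit S'.det := (Matrix.isUnit_iff_isUnit_det S').mp hS'
  rw [eq_conj hS'd heq, ← Matrix.mul_assoc, ← Matrix.mul_assoc,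
    Matrix.nonsing_inv_mul _ hSd, Matrix.one_mul]

lemma conj_smul_one {S : Matrix ι ι k} (hSd : IsUnit S.det) (c : k) :
    S * (c • (1 : Matrix ι ι k)) * S⁻¹ = c • 1 := by
  rw [Matrix.mul_smul, Matrix.mul_one, Matrix.smul_mul, Matrix.mul_nonsing_inv _ hSd]

lemma Brk.of_eqv {M M' : Matrix ι ι k} (he : Eqv β M M') (hb : Brk β M) : Brk β M' := by
  obtain ⟨S, S', hadm, hS, hS', heq⟩ := he
  obtain ⟨hM, hend⟩ := hb
  have hSd : IsUnit S.det := (Matrix.isUnit_iff_isUnit_det S).mp hS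
  have hS'd : IsUnit S'.det := (Matrix.isUnit_iff_isUnit_det S').mp hS'
  have hsymm : S⁻¹ * M' = M * S'⁻¹ := inv_mul_eq hS hS' heq
  constructor
  · rw [eq_conj hS'd heq]
    exact (hS.mul hM).mul (isUnit_inv hS')
  · intro U U' hUadm hUeq
    have key : (S⁻¹ * U * S) * M = M * (S'⁻¹ * (U' * S')) := by
      simp only [Matrix.mul_assoc]
      rw [heq, ← Matrix.mul_assoc U M' S', hUeq, Matrix.mul_assoc M' U' S',
        ← Matrix.mul_assoc S⁻¹ M' (U' * S'), hsymm, Matrix.mul_assoc]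
    have key' : (S⁻¹ * U * S) * M = M * (S'⁻¹ * U' * S') := by
      rw [key, Matrix.mul_assoc S'⁻¹ U' S']
    have hadm2 : Adm β (S⁻¹ * U * S) (S'⁻¹ * U' * S') :=
      ((hadm.inv hS hS').mul hUadm).mul hadm
    obtain ⟨c, hc1, hc2⟩ := hend _ _ hadm2 key'
    have hcS : ∀ (T U₀ : Matrix ι ι k), IsUnit T.det → T⁻¹ * U₀ * T = c • 1 → U₀ = c • 1 := by
      intro T U₀ hTd hcc
      have h0 : T * (T⁻¹ * U₀ * T) * T⁻¹ = U₀ := by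
        simp only [← Matrix.mul_assoc]
        rw [Matrix.mul_nonsing_inv _ hTd, Matrix.one_mul, Matrix.mul_assoc,
          Matrix.mul_nonsing_inv _ hTd, Matrix.mul_one]
      rw [← h0, hcc, conj_smul_one hTd]
    exact ⟨c, hcS S U hSd hc1, hcS S' U' hS'd hc2⟩

lemma vecMulVec_left (M : Matrix ι ι k) (x y : ι → k) :
    M * vecMulVec x y = vecMulVec (M.mulVec x) y := by
  ext i j
  simp only [Matrix.mul_apply, vecMulVec_apply, Matrix.mulVec, dotProduct, Finset.sum_mul]
  exact Finset.sum_congr rfl fun l _ => by ring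

lemma vecMulVec_right (M : Matrix ι ι k) (x y : ι → k) :
    vecMulVec x y * M = vecMulVec x (Matrix.vecMul y M) := by
  ext i j
  simp only [Matrix.mul_apply, vecMulVec_apply, Matrix.vecMul, dotProduct, Finset.mul_sum]
  exact Finset.sum_congr rfl fun l _ => by ring

lemma brk_no_xy {M : Matrix ι ι k} (hb : Brk β M) (x y : ι → k) (hx0 : x ≠ 0) (hy0 : y ≠ 0)
    (hxs : ∀ i, β i = 0 → x i = 0) (hys : ∀ i, β i = 1 → y i = 0)
    (hMx : ∀ i, β i = 0 → M.mulVec x i = 0) (hyM : ∀ j, β j = 1 → Matrix.vecMul y M j = 0) :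
    False := by
  classical
  set S : Matrix ι ι k := vecMulVec (M.mulVec x) y with hS
  set S' : Matrix ι ι k := vecMulVec x (Matrix.vecMul y M) with hS'
  have hadm : Adm β S S' := by
    constructor
    · intro i j hij
      obtain ⟨hi, hj⟩ := fin2_lt hij
      constructor
      · show (M.mulVec x) i * y j = 0
        rw [hys j hj, mul_zero]
      · show x i * (Matrix.vecMul y M) j = 0
        rw [hxs i hi, zero_mul]
    · intro i j hij
      rcases fin2_cases (β i) with h0 | h1
      · have hj0 : β j = 0 := hij ▸ h0
        show (M.mulVec x) i * y j = x i * (Matrix.vecMul y M) j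
        rw [hMx i h0, hxs i h0, zero_mul, zero_mul]
      · have hj1 : β j = 1 := hij ▸ h1
        show (M.mulVec x) i * y j = x i * (Matrix.vecMul y M) j
        rw [hys j hj1, hyM j hj1, mul_zero, mul_zero]
  have heq : S * M = M * S' := by
    rw [hS, hS', vecMulVec_right, vecMulVec_left]
  obtain ⟨c, hc1, hc2⟩ := hb.2 S S' hadm heq
  obtain ⟨j0, hj0⟩ := Function.ne_iff.mp hy0
  simp only [Pi.zero_apply] at hj0
  have hbj0 : β j0 = 0 := by
    rcases fin2_cases (β j0) with h | h
    · exact h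
    · exact absurd (hys j0 h) hj0
  have hc0 : c = 0 := by
    have h1 : S' j0 j0 = c := by rw [hc2]; simp [Matrix.one_apply]
    have h2 : S' j0 j0 = 0 := by
      show x j0 * (Matrix.vecMul y M) j0 = 0
      rw [hxs j0 hbj0, zero_mul]
    rw [← h1, h2]
  have hMx0 : M.mulVec x ≠ 0 := by
    intro h
    apply hx0
    have hMd : IsUnit M.det := (Matrix.isUnit_iff_isUnit_det M).mp hb.1
    have : (M⁻¹ * M).mulVec x = M⁻¹.mulVec (M.mulVec x) := (Matrix.mulVec_mulVec ..).symm
    rw [Matrix.nonsing_inv_mul _ hMd, h] at this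
    simpa using this
  obtain ⟨i0, hi0⟩ := Function.ne_iff.mp hMx0
  simp only [Pi.zero_apply] at hi0
  have h3 : S i0 j0 = 0 := by rw [hc1, hc0]; simp
  have h4 : S i0 j0 = (M.mulVec x) i0 * y j0 := rfl
  exact mul_ne_zero hi0 hj0 (h4 ▸ h3)

end Basic

section Transport
variable {ι κ : Type*} [Fintype ι] [DecidableEq ι] [Fintype κ] [DecidableEq κ]
variable {β : ι → Fin 2} {γ : κ → Fin 2}

lemma submatrix_equiv_inj (e : ι ≃ κ) : Function.Injective
    (fun M : Matrix κ κ k => M.submatrix e e) := by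
  intro A B h
  ext i j
  have := congrFun (congrFun h (e.symm i)) (e.symm j)
  simpa using this

lemma adm_reindex (e : ι ≃ κ) (hβ : ∀ i, β i = γ (e i)) {S S' : Matrix κ κ k} :
    Adm β (S.submatrix e e) (S'.submatrix e e) ↔ Adm γ S S' := by
  constructor
  · rintro ⟨z, q⟩
    constructor
    · intro i j hij
      have := z (e.symm i) (e.symm j)
        (by rw [hβ, hβ, e.apply_symm_apply, e.apply_symm_apply]; exact hij)
      simpa using this
    · intro i j hij
      have := q (e.symm i) (e.symm j)
        (by rw [hβ, hβ, e.apply_symm_apply, e.apply_symm_apply]; exact hij)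
      simpa using this
  · rintro ⟨z, q⟩
    exact ⟨fun i j hij => z (e i) (e j) (by rw [← hβ, ← hβ]; exact hij),
           fun i j hij => q (e i) (e j) (by rw [← hβ, ← hβ]; exact hij)⟩

lemma isUnit_reindex (e : ι ≃ κ) {M : Matrix κ κ k} :
    IsUnit (M.submatrix e e) ↔ IsUnit M := by
  rw [Matrix.isUnit_iff_isUnit_det, Matrix.isUnit_iff_isUnit_det M,
    Matrix.det_submatrix_equiv_self]

lemma smul_one_reindex (e : ι ≃ κ) (c : k) :
    ((c • (1 : Matrix κ κ k)).submatrix e e) = c • (1 : Matrix ι ι k) := by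
  ext i j
  simp [Matrix.submatrix_apply, Matrix.one_apply, Equiv.apply_eq_iff_eq]

lemma brk_reindex (e : ι ≃ κ) (hβ : ∀ i, β i = γ (e i)) {M : Matrix κ κ k} :
    Brk β (M.submatrix e e) ↔ Brk γ M := by
  constructor
  · rintro ⟨hu, hend⟩
    refine ⟨(isUnit_reindex e).mp hu, ?_⟩
    intro T T' hadm heq
    have heq' : (T.submatrix e e) * (M.submatrix e e) = (M.submatrix e e) * (T'.submatrix e e) := by
      rw [Matrix.submatrix_mul_equiv, Matrix.submatrix_mul_equiv, heq]
    obtain ⟨c, hc1, hc2⟩ := hend _ _ ((adm_reindex e hβ).mpr hadm) heq'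
    rw [← smul_one_reindex e c] at hc1 hc2
    exact ⟨c, submatrix_equiv_inj e hc1, submatrix_equiv_inj e hc2⟩
  · rintro ⟨hu, hend⟩
    refine ⟨(isUnit_reindex e).mpr hu, ?_⟩
    intro S S' hadm heq
    set T := S.submatrix e.symm e.symm with hT
    set T' := S'.submatrix e.symm e.symm with hT'
    have hTS : T.submatrix e e = S := by
      rw [hT, Matrix.submatrix_submatrix]
      simp
    have hTS' : T'.submatrix e e = S' := by
      rw [hT', Matrix.submatrix_submatrix]
      simp
    have heq' : T * M = M * T' := by
      apply submatrix_equiv_inj e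
      show (T * M).submatrix e e = (M * T').submatrix e e
      rw [← Matrix.submatrix_mul_equiv T M e e e, ← Matrix.submatrix_mul_equiv M T' e e e,
        hTS, hTS']
      exact heq
    rw [← hTS, ← hTS'] at hadm
    obtain ⟨c, hc1, hc2⟩ := hend T T' ((adm_reindex e hβ).mp hadm) heq'
    refine ⟨c, ?_, ?_⟩
    · rw [← hTS, hc1, smul_one_reindex]
    · rw [← hTS', hc2, smul_one_reindex]

lemma eqv_reindex (e : ι ≃ κ) (hβ : ∀ i, β i = γ (e i)) {M M' : Matrix κ κ k} :
    Eqv β (M.submatrix e e) (M'.submatrix e e) ↔ Eqv γ M M' := by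
  constructor
  · rintro ⟨S, S', hadm, hS, hS', heq⟩
    set T := S.submatrix e.symm e.symm with hT
    set T' := S'.submatrix e.symm e.symm with hT'
    have hTS : T.submatrix e e = S := by rw [hT, Matrix.submatrix_submatrix]; simp
    have hTS' : T'.submatrix e e = S' := by rw [hT', Matrix.submatrix_submatrix]; simp
    refine ⟨T, T', (adm_reindex e hβ).mp (by rw [hTS, hTS']; exact hadm),
      (isUnit_reindex e).mp (by rw [hTS]; exact hS),
      (isUnit_reindex e).mp (by rw [hTS']; exact hS'), ?_⟩
    apply submatrix_equiv_inj e
    show (T * M).submatrix e e = (M' * T').submatrix e e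
    rw [← Matrix.submatrix_mul_equiv T M e e e, ← Matrix.submatrix_mul_equiv M' T' e e e,
      hTS, hTS']
    exact heq
  · rintro ⟨S, S', hadm, hS, hS', heq⟩
    refine ⟨S.submatrix e e, S'.submatrix e e, (adm_reindex e hβ).mpr hadm,
      (isUnit_reindex e).mpr hS, (isUnit_reindex e).mpr hS', ?_⟩
    rw [Matrix.submatrix_mul_equiv, Matrix.submatrix_mul_equiv, heq]

lemma sb_reindex (e : ι ≃ κ) (hβ : ∀ i, β i = γ (e i)) (b : Fin 2) :
    sb β b = sb γ b := by
  unfold sb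
  apply Finset.card_bij' (fun i _ => e i) (fun j _ => e.symm j)
  · intro i hi
    simp only [Finset.mem_filter, Finset.mem_univ, true_and] at hi ⊢
    rw [← hβ]; exact hi
  · intro j hj
    simp only [Finset.mem_filter, Finset.mem_univ, true_and] at hj ⊢
    rw [hβ, e.apply_symm_apply]; exact hj
  · intros; simp
  · intros; simp

lemma stmt_reindex (e : ι ≃ κ) (hβ : ∀ i, β i = γ (e i)) (h : Stmt k γ) : Stmt k β := by
  obtain ⟨h1, h2⟩ := h
  constructor
  · rw [sb_reindex e hβ 0, sb_reindex e hβ 1, ← h1]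
    constructor
    · rintro ⟨M, hM⟩
      refine ⟨M.submatrix e.symm e.symm, ?_⟩
      have : (M.submatrix e.symm e.symm).submatrix e e = M := by
        rw [Matrix.submatrix_submatrix]; simp
      exact (brk_reindex e hβ).mp (by rw [this]; exact hM)
    · rintro ⟨M, hM⟩
      exact ⟨M.submatrix e e, (brk_reindex e hβ).mpr hM⟩
  · intro hgcd
    rw [sb_reindex e hβ 0, sb_reindex e hβ 1] at hgcd
    obtain ⟨h3, h4⟩ := h2 hgcd
    constructor
    · intro M M' hM hM' hdet
      set N := M.submatrix e.symm e.symm with hN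
      set N' := M'.submatrix e.symm e.symm with hN'
      have hNM : N.submatrix e e = M := by rw [hN, Matrix.submatrix_submatrix]; simp
      have hNM' : N'.submatrix e e = M' := by rw [hN', Matrix.submatrix_submatrix]; simp
      have hbN : Brk γ N := (brk_reindex e hβ).mp (by rw [hNM]; exact hM)
      have hbN' : Brk γ N' := (brk_reindex e hβ).mp (by rw [hNM']; exact hM')
      have hdet' : N.det = N'.det := by
        rw [hN, hN', Matrix.det_submatrix_equiv_self, Matrix.det_submatrix_equiv_self]
        exact hdet
      have := (eqv_reindex e hβ).mpr (h3 N N' hbN hbN' hdet')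
      rw [hNM, hNM'] at this
      exact this
    · intro c hc
      obtain ⟨N, hbN, hdN⟩ := h4 c hc
      refine ⟨N.submatrix e e, (brk_reindex e hβ).mpr hbN, ?_⟩
      rw [Matrix.det_submatrix_equiv_self]
      exact hdN

end Transport


section Base
variable {ι : Type*} [Fintype ι] [DecidableEq ι]

lemma scalar_of_card_one {i0 : ι} (hi0 : ∀ j : ι, j = i0) (A : Matrix ι ι k) :
    A = (A i0 i0) • 1 := by
  ext i j
  rw [hi0 i, hi0 j]
  simp [Matrix.one_apply]

lemma det_of_card_one {i0 : ι} (hi0 : ∀ j : ι, j = i0) (A : Matrix ι ι k) :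
    A.det = A i0 i0 := by
  letI : Unique ι := ⟨⟨i0⟩, hi0⟩
  rw [Matrix.det_unique]
  rw [hi0 default]

lemma sb_const {β : ι → Fin 2} (b0 : Fin 2) (hconst : ∀ i, β i = b0) :
    sb β b0 = Fintype.card ι ∧ ∀ b : Fin 2, b ≠ b0 → sb β b = 0 := by
  constructor
  · unfold sb
    rw [Finset.filter_true_of_mem (fun i _ => hconst i), Finset.card_univ]
  · intro b hb
    unfold sb
    rw [Finset.card_eq_zero, Finset.filter_eq_empty_iff]
    intro i _
    rw [hconst i]
    exact fun h => hb h.symm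

lemma stmt_const [Nonempty ι] (β : ι → Fin 2) (b0 : Fin 2) (hconst : ∀ i, β i = b0) :
    Stmt k β := by
  classical
  have hβeq : ∀ i j : ι, β i = β j := fun i j => (hconst i).trans (hconst j).symm
  have hnolt : ∀ i j : ι, ¬ β i < β j := by
    intro i j h
    rw [hβeq i j] at h
    exact lt_irrefl _ h
  have hadm_iff : ∀ S S' : Matrix ι ι k, Adm β S S' ↔ S = S' := by
    intro S S'
    constructor
    · rintro ⟨z, q⟩
      ext i j
      exact q i j (hβeq i j)
    · rintro rfl
      exact ⟨fun i j h => absurd h (hnolt i j), fun i j _ => rfl⟩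
  have hgcd : Nat.gcd (sb β 0) (sb β 1) = Fintype.card ι := by
    obtain ⟨h1, h2⟩ := sb_const b0 hconst
    rcases fin2_cases b0 with rfl | rfl
    · rw [h1, h2 1 (by decide)]
      exact Nat.gcd_zero_right _
    · rw [h1, h2 0 (by decide)]
      exact Nat.gcd_zero_left _
  rcases Nat.lt_or_ge (Fintype.card ι) 2 with hcard | hcard
  · -- card = 1
    have hcard1 : Fintype.card ι = 1 := by
      have : 1 ≤ Fintype.card ι := Fintype.card_pos
      omega
    obtain ⟨i0, hi0⟩ := Fintype.card_eq_one_iff.mp hcard1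
    have hbrick : ∀ c : k, c ≠ 0 → Brk β (c • (1 : Matrix ι ι k)) := by
      intro c hc
      constructor
      · rw [Matrix.isUnit_iff_isUnit_det, Matrix.det_smul, Matrix.det_one, hcard1]
        simpa using hc.isUnit
      · intro S S' hadm _
        rw [hadm_iff] at hadm
        subst hadm
        exact ⟨S i0 i0, scalar_of_card_one hi0 S, scalar_of_card_one hi0 S⟩
    constructor
    · rw [hgcd, hcard1]
      simp only [iff_true]
      exact ⟨(1 : k) • 1, hbrick 1 one_ne_zero⟩
    · intro _
      constructor
      · intro M M' hM hM' hdet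
        have h1 : M = M' := by
          rw [scalar_of_card_one hi0 M, scalar_of_card_one hi0 M',
            ← det_of_card_one hi0 M, ← det_of_card_one hi0 M', hdet]
        rw [h1]
        exact Eqv.refl M'
      · intro c hc
        refine ⟨c • 1, hbrick c hc, ?_⟩
        rw [det_of_card_one hi0]
        simp [Matrix.one_apply]
  · -- card ≥ 2 : no bricks
    have hnobrick : ¬ ∃ M : Matrix ι ι k, Brk β M := by
      rintro ⟨M, hMu, hend⟩
      obtain ⟨c, hc, -⟩ := hend M M ((hadm_iff M M).mpr rfl) rfl
      obtain ⟨i0, j0, hij⟩ := Fintype.exists_pair_of_one_lt_card (α := ι) (by omega)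
      set E : Matrix ι ι k := Matrix.single i0 i0 1 with hE
      have hEM : E * M = M * E := by
        rw [hc, Matrix.smul_mul, Matrix.mul_smul, Matrix.one_mul, Matrix.mul_one]
      obtain ⟨c', hc', -⟩ := hend E E ((hadm_iff E E).mpr rfl) hEM
      have h1 : E i0 i0 = c' := by rw [hc']; simp [Matrix.one_apply]
      have h2 : E j0 j0 = c' := by rw [hc']; simp [Matrix.one_apply]
      rw [hE] at h1 h2
      simp only [Matrix.single_apply_same] at h1
      rw [Matrix.single_apply_of_ne _ _ _ _ _ (fun h => hij h.1)] at h2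
      rw [← h2] at h1
      exact one_ne_zero h1
    constructor
    · rw [hgcd]
      constructor
      · intro h; exact absurd h hnobrick
      · intro h; omega
    · intro h
      rw [hgcd] at h
      omega

end Base



section Canon

/-- canonical block function on a sum type -/
def cβ (n₁ n₂ : Type*) : n₁ ⊕ n₂ → Fin 2 := Sum.elim (fun _ => 0) (fun _ => 1)

variable {n₁ n₂ : Type*} [Fintype n₁] [DecidableEq n₁] [Fintype n₂] [DecidableEq n₂]

lemma adm_cβ (A : Matrix n₁ n₁ k) (C C' : Matrix n₂ n₁ k) (D : Matrix n₂ n₂ k) :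
    Adm (cβ n₁ n₂) (fromBlocks A 0 C D) (fromBlocks A 0 C' D) := by
  constructor
  · rintro (i|i) (j|j) hlt
    · simp only [cβ, Sum.elim_inl] at hlt
      exact absurd hlt (by decide)
    · constructor <;> simp
    · simp only [cβ, Sum.elim_inl, Sum.elim_inr] at hlt
      exact absurd hlt (by decide)
    · simp only [cβ, Sum.elim_inr] at hlt
      exact absurd hlt (by decide)
  · rintro (i|i) (j|j) heq
    · simp
    · simp only [cβ, Sum.elim_inl, Sum.elim_inr] at heq
      exact absurd heq (by decide)
    · simp only [cβ, Sum.elim_inl, Sum.elim_inr] at heq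
      exact absurd heq (by decide)
    · simp

lemma adm_cβ_decomp {S S' : Matrix (n₁ ⊕ n₂) (n₁ ⊕ n₂) k} (h : Adm (cβ n₁ n₂) S S') :
    ∃ (A : Matrix n₁ n₁ k) (C C' : Matrix n₂ n₁ k) (D : Matrix n₂ n₂ k),
      S = fromBlocks A 0 C D ∧ S' = fromBlocks A 0 C' D := by
  obtain ⟨z, q⟩ := h
  refine ⟨S.toBlocks₁₁, S.toBlocks₂₁, S'.toBlocks₂₁, S.toBlocks₂₂, ?_, ?_⟩
  · ext (i|i) (j|j)
    · simp [Matrix.toBlocks₁₁]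
    · have := (z (Sum.inl i) (Sum.inr j) (show (0:Fin 2) < 1 by decide)).1
      simp [this]
    · simp [Matrix.toBlocks₂₁]
    · simp [Matrix.toBlocks₂₂]
  · ext (i|i) (j|j)
    · have := q (Sum.inl i) (Sum.inl j) rfl
      simp [Matrix.toBlocks₁₁, ← this]
    · have := (z (Sum.inl i) (Sum.inr j) (show (0:Fin 2) < 1 by decide)).2
      simp [this]
    · simp [Matrix.toBlocks₂₁]
    · have := q (Sum.inr i) (Sum.inr j) rfl
      simp [Matrix.toBlocks₂₂, ← this]

lemma isUnit_fromBlocks_zero₁₂ {A : Matrix n₁ n₁ k} {C : Matrix n₂ n₁ k} {D : Matrix n₂ n₂ k} :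
    IsUnit (fromBlocks A 0 C D) ↔ IsUnit A ∧ IsUnit D := by
  rw [Matrix.isUnit_iff_isUnit_det, Matrix.det_fromBlocks_zero₁₂,
    Matrix.isUnit_iff_isUnit_det A, Matrix.isUnit_iff_isUnit_det D, (Commute.all _ _).isUnit_mul_iff]

lemma sb_cβ0 : sb (cβ n₁ n₂) 0 = Fintype.card n₁ := by
  unfold sb
  have : (Finset.univ.filter fun x : n₁ ⊕ n₂ => cβ n₁ n₂ x = 0) =
      Finset.univ.map ⟨Sum.inl, Sum.inl_injective⟩ := by
    ext (i|i)
    · rw [Finset.mem_filter]; simp [cβ]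
    · rw [Finset.mem_filter]; simp [cβ]
  rw [this, Finset.card_map, Finset.card_univ]

lemma sb_cβ1 : sb (cβ n₁ n₂) 1 = Fintype.card n₂ := by
  unfold sb
  have : (Finset.univ.filter fun x : n₁ ⊕ n₂ => cβ n₁ n₂ x = 1) =
      Finset.univ.map ⟨Sum.inr, Sum.inr_injective⟩ := by
    ext (i|i)
    · rw [Finset.mem_filter]; simp [cβ]
    · rw [Finset.mem_filter]; simp [cβ]
  rw [this, Finset.card_map, Finset.card_univ]

lemma ext_mulVec {M N : Matrix n₁ n₂ k} (h : ∀ x, M *ᵥ x = N *ᵥ x) : M = N := by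
  ext i j
  have := congrFun (h (Pi.single j 1)) i
  simpa [Matrix.mulVec, dotProduct, Pi.single_apply, mul_ite] using this

lemma exists_unit_mul_eq_of_inj (Q Q' : Matrix n₁ n₂ k)
    (hQ : Function.Injective Q.mulVec) (hQ' : Function.Injective Q'.mulVec) :
    ∃ A : Matrix n₁ n₁ k, IsUnit A ∧ A * Q = Q' := by
  classical
  set f : (n₂ → k) →ₗ[k] (n₁ → k) := Q.mulVecLin with hf
  set g : (n₂ → k) →ₗ[k] (n₁ → k) := Q'.mulVecLin with hg
  have hfi : Function.Injective f := hQ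
  have hgi : Function.Injective g := hQ'
  obtain ⟨P1, hP1⟩ := Submodule.exists_isCompl (LinearMap.range f)
  obtain ⟨P2, hP2⟩ := Submodule.exists_isCompl (LinearMap.range g)
  have hfr : Module.finrank k (LinearMap.range f) = Module.finrank k (LinearMap.range g) := by
    rw [← (LinearEquiv.ofInjective f hfi).finrank_eq, ← (LinearEquiv.ofInjective g hgi).finrank_eq]
  have hP12 : Module.finrank k P1 = Module.finrank k P2 := by
    have h1 := Submodule.finrank_add_eq_of_isCompl hP1
    have h2 := Submodule.finrank_add_eq_of_isCompl hP2
    omega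
  let e₁ : LinearMap.range f ≃ₗ[k] LinearMap.range g :=
    (LinearEquiv.ofInjective f hfi).symm.trans (LinearEquiv.ofInjective g hgi)
  let e₂ : P1 ≃ₗ[k] P2 := LinearEquiv.ofFinrankEq _ _ hP12
  let e : (n₁ → k) ≃ₗ[k] (n₁ → k) :=
    (Submodule.prodEquivOfIsCompl _ _ hP1).symm.trans
      ((e₁.prodCongr e₂).trans (Submodule.prodEquivOfIsCompl _ _ hP2))
  have he : ∀ x : n₂ → k, e (f x) = g x := by
    intro x
    have h1 : (Submodule.prodEquivOfIsCompl _ _ hP1).symm (f x) =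
        ((⟨f x, LinearMap.mem_range_self f x⟩ : LinearMap.range f), (0 : P1)) :=
      Submodule.prodEquivOfIsCompl_symm_apply_left (h := hP1)
        (x := (⟨f x, LinearMap.mem_range_self f x⟩ : LinearMap.range f))
    show ((Submodule.prodEquivOfIsCompl _ _ hP1).symm.trans
      ((e₁.prodCongr e₂).trans (Submodule.prodEquivOfIsCompl _ _ hP2))) (f x) = g x
    rw [LinearEquiv.trans_apply, h1, LinearEquiv.trans_apply]
    have h2 : (e₁.prodCongr e₂) ((⟨f x, LinearMap.mem_range_self f x⟩ : LinearMap.range f), 0) =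
        (e₁ (⟨f x, LinearMap.mem_range_self f x⟩ : LinearMap.range f), (0 : P2)) :=
      Prod.ext rfl (map_zero e₂)
    rw [h2]
    have h3 : e₁ (⟨f x, LinearMap.mem_range_self f x⟩ : LinearMap.range f) = ⟨g x, LinearMap.mem_range_self g x⟩ := by
      show (LinearEquiv.ofInjective g hgi) ((LinearEquiv.ofInjective f hfi).symm
        (⟨f x, LinearMap.mem_range_self f x⟩ : LinearMap.range f)) = _
      have h4 : (LinearEquiv.ofInjective f hfi).symm (⟨f x, LinearMap.mem_range_self f x⟩ : LinearMap.range f) = x := by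
        apply (LinearEquiv.ofInjective f hfi).injective
        rw [LinearEquiv.apply_symm_apply]
        rfl
      rw [h4]
      rfl
    rw [h3]
    simp [Submodule.coe_prodEquivOfIsCompl]
  set A : Matrix n₁ n₁ k := LinearMap.toMatrix' (e : (n₁ → k) →ₗ[k] (n₁ → k)) with hA
  have hAv : ∀ z : n₁ → k, A *ᵥ z = e z := by
    intro z
    rw [hA, ← Matrix.toLin'_apply, Matrix.toLin'_toMatrix']
    rfl
  refine ⟨A, ?_, ?_⟩
  · set B : Matrix n₁ n₁ k := LinearMap.toMatrix' (e.symm : (n₁ → k) →ₗ[k] (n₁ → k)) with hB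
    have : A * B = 1 := by
      rw [hA, hB, ← LinearMap.toMatrix'_comp]
      have : (e : (n₁ → k) →ₗ[k] (n₁ → k)) ∘ₗ (e.symm : (n₁ → k) →ₗ[k] (n₁ → k)) =
          LinearMap.id := by
        ext x
        simp
      rw [this, LinearMap.toMatrix'_id]
    have hdet : A.det * B.det = 1 := by
      rw [← Matrix.det_mul, this, Matrix.det_one]
    rw [Matrix.isUnit_iff_isUnit_det]
    exact IsUnit.of_mul_eq_one _ hdet
  · apply ext_mulVec
    intro x
    rw [← Matrix.mulVec_mulVec, hAv]
    have : Q *ᵥ x = f x := rfl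
    rw [this, he x]
    rfl

end Canon



section Up
variable {a m : ℕ}

/-- lift a matrix on `Fin a ⊕ Fin m` to the normal form matrix on `(Fin a ⊕ Fin m) ⊕ Fin m` -/
def up (p : Matrix (Fin a) (Fin a) k) (q : Matrix (Fin a) (Fin m) k)
    (u : Matrix (Fin m) (Fin a) k) (v : Matrix (Fin m) (Fin m) k) :
    Matrix ((Fin a ⊕ Fin m) ⊕ Fin m) ((Fin a ⊕ Fin m) ⊕ Fin m) k :=
  fromBlocks (fromBlocks p q 0 0) (fromRows 0 1) (fromCols u v) 0

def σswap (a m : ℕ) : Equiv.Perm ((Fin a ⊕ Fin m) ⊕ Fin m) :=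
  (Equiv.sumAssoc (Fin a) (Fin m) (Fin m)).trans
    (((Equiv.refl (Fin a)).sumCongr (Equiv.sumComm (Fin m) (Fin m))).trans
      (Equiv.sumAssoc (Fin a) (Fin m) (Fin m)).symm)

lemma up_submatrix (p : Matrix (Fin a) (Fin a) k) (q : Matrix (Fin a) (Fin m) k)
    (u : Matrix (Fin m) (Fin a) k) (v : Matrix (Fin m) (Fin m) k) :
    (up p q u v).submatrix (σswap a m) id = fromBlocks (fromBlocks p q u v) 0 0 1 := by
  ext (⟨i|i⟩|i) (⟨j|j⟩|j) <;>
    simp [up, σswap, Matrix.submatrix_apply, Equiv.sumAssoc, Equiv.sumComm, Equiv.sumCongr,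
      Matrix.one_apply]

def eps (a m : ℕ) : ℤ := ((Equiv.Perm.sign (σswap a m) : ℤˣ) : ℤ)

lemma eps_sq : eps a m * eps a m = 1 := by
  unfold eps
  rw [← Units.val_mul, Int.units_mul_self, Units.val_one]

lemma eps_sq_k : (eps a m : k) * (eps a m : k) = 1 := by
  have h : ((eps a m * eps a m : ℤ) : k) = ((1 : ℤ) : k) := congrArg _ (eps_sq (a := a) (m := m))
  push_cast at h
  exact h

lemma eps_ne_zero : (eps a m : k) ≠ 0 := by
  intro h
  have h2 : ((eps a m * eps a m : ℤ) : k) = 0 := by push_cast; rw [h, mul_zero]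
  rw [eps_sq] at h2
  simpa using h2

lemma det_up (p : Matrix (Fin a) (Fin a) k) (q : Matrix (Fin a) (Fin m) k)
    (u : Matrix (Fin m) (Fin a) k) (v : Matrix (Fin m) (Fin m) k) :
    (up p q u v).det = (eps a m : k) * (fromBlocks p q u v).det := by
  have h := Matrix.det_permute (σswap a m) (up p q u v)
  rw [up_submatrix, Matrix.det_fromBlocks_zero₂₁, Matrix.det_one, mul_one] at h
  have hsgn : ((Equiv.Perm.sign (σswap a m) : ℤ) : k) = ((eps a m : ℤ) : k) := rfl
  rw [hsgn] at h
  calc (up p q u v).det = ((eps a m : k) * (eps a m : k)) * (up p q u v).det := by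
        rw [eps_sq_k, one_mul]
    _ = (eps a m : k) * (fromBlocks p q u v).det := by
        rw [mul_assoc, ← h]

lemma isUnit_up_iff (p : Matrix (Fin a) (Fin a) k) (q : Matrix (Fin a) (Fin m) k)
    (u : Matrix (Fin m) (Fin a) k) (v : Matrix (Fin m) (Fin m) k) :
    IsUnit (up p q u v) ↔ IsUnit (fromBlocks p q u v) := by
  rw [Matrix.isUnit_iff_isUnit_det, Matrix.isUnit_iff_isUnit_det, det_up,
    isUnit_iff_ne_zero, isUnit_iff_ne_zero, mul_ne_zero_iff]
  have := eps_ne_zero (a := a) (m := m) (k := k)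
  tauto

end Up



section UpBrick
variable {a m : ℕ}

lemma fromCols_add {n n₁ n₂ : Type*} (A₁ : Matrix n n₁ k) (A₂ : Matrix n n₂ k)
    (B₁ : Matrix n n₁ k) (B₂ : Matrix n n₂ k) :
    fromCols A₁ A₂ + fromCols B₁ B₂ = fromCols (A₁ + B₁) (A₂ + B₂) := by
  ext i (j|j) <;> simp

lemma smul_one_blocks {n₁ n₂ : Type*} [Fintype n₁] [DecidableEq n₁] [Fintype n₂] [DecidableEq n₂]
    (cc : k) : cc • (1 : Matrix (n₁ ⊕ n₂) (n₁ ⊕ n₂) k) = fromBlocks (cc • 1) 0 0 (cc • 1) := by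
  rw [← Matrix.fromBlocks_one, Matrix.fromBlocks_smul, smul_zero, smul_zero]

lemma zero_as_fromCols {n n₁ n₂ : Type*} :
    (0 : Matrix n (n₁ ⊕ n₂) k) = fromCols 0 0 := Matrix.fromCols_zero.symm

-- products with the canonical Q₀ = fromRows 0 1
lemma mulQ0 (A₀ : Matrix (Fin a) (Fin a) k) (A₂ : Matrix (Fin a) (Fin m) k)
    (A₃ : Matrix (Fin m) (Fin a) k) (A₄ : Matrix (Fin m) (Fin m) k) :
    fromBlocks A₀ A₂ A₃ A₄ * (fromRows 0 1 : Matrix (Fin a ⊕ Fin m) (Fin m) k) =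
      fromRows A₂ A₄ := by
  rw [Matrix.fromBlocks_mul_fromRows]
  simp

lemma colsMulQ0 (c₁ : Matrix (Fin m) (Fin a) k) (c₂ : Matrix (Fin m) (Fin m) k) :
    fromCols c₁ c₂ * (fromRows 0 1 : Matrix (Fin a ⊕ Fin m) (Fin m) k) = c₂ := by
  rw [Matrix.fromCols_mul_fromRows]
  simp

lemma q0Mul (D : Matrix (Fin m) (Fin m) k) :
    (fromRows 0 1 : Matrix (Fin a ⊕ Fin m) (Fin m) k) * D = fromRows 0 D := by
  rw [Matrix.fromRows_mul]
  simp

lemma q0MulCols (g₁ : Matrix (Fin m) (Fin a) k) (g₂ : Matrix (Fin m) (Fin m) k) :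
    (fromRows 0 1 : Matrix (Fin a ⊕ Fin m) (Fin m) k) * fromCols g₁ g₂ =
      fromBlocks 0 0 g₁ g₂ := by
  rw [Matrix.fromRows_mul, Matrix.zero_mul, Matrix.one_mul, zero_as_fromCols,
    Matrix.fromRows_fromCols_eq_fromBlocks]

lemma blocksMulZ (α : Matrix (Fin a) (Fin a) k) (a₂ : Matrix (Fin a) (Fin m) k)
    (a₃ : Matrix (Fin m) (Fin a) k) (a₄ : Matrix (Fin m) (Fin m) k)
    (p : Matrix (Fin a) (Fin a) k) (q : Matrix (Fin a) (Fin m) k) :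
    fromBlocks α a₂ a₃ a₄ * fromBlocks p q (0 : Matrix (Fin m) (Fin a) k)
      (0 : Matrix (Fin m) (Fin m) k) = fromBlocks (α*p) (α*q) (a₃*p) (a₃*q) := by
  rw [Matrix.fromBlocks_multiply]
  simp

lemma zMulBlocks (p : Matrix (Fin a) (Fin a) k) (q : Matrix (Fin a) (Fin m) k)
    (α : Matrix (Fin a) (Fin a) k) (a₂ : Matrix (Fin a) (Fin m) k)
    (a₃ : Matrix (Fin m) (Fin a) k) (a₄ : Matrix (Fin m) (Fin m) k) :
    fromBlocks p q (0 : Matrix (Fin m) (Fin a) k) (0 : Matrix (Fin m) (Fin m) k) *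
      fromBlocks α a₂ a₃ a₄ = fromBlocks (p*α + q*a₃) (p*a₂ + q*a₄) 0 0 := by
  rw [Matrix.fromBlocks_multiply]
  simp

lemma colsMulBlocksZ (c₁ : Matrix (Fin m) (Fin a) k) (c₂ : Matrix (Fin m) (Fin m) k)
    (p : Matrix (Fin a) (Fin a) k) (q : Matrix (Fin a) (Fin m) k) :
    fromCols c₁ c₂ * fromBlocks p q (0 : Matrix (Fin m) (Fin a) k)
      (0 : Matrix (Fin m) (Fin m) k) = fromCols (c₁*p) (c₁*q) := by
  rw [Matrix.fromCols_mul_fromBlocks]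
  simp

lemma colsMulBlocks (u : Matrix (Fin m) (Fin a) k) (v : Matrix (Fin m) (Fin m) k)
    (α : Matrix (Fin a) (Fin a) k) (a₂ : Matrix (Fin a) (Fin m) k)
    (a₃ : Matrix (Fin m) (Fin a) k) (a₄ : Matrix (Fin m) (Fin m) k) :
    fromCols u v * fromBlocks α a₂ a₃ a₄ = fromCols (u*α + v*a₃) (u*a₂ + v*a₄) := by
  rw [Matrix.fromCols_mul_fromBlocks]

/-- left multiplication of the normal form: the generic computation -/
lemma up_mul_left (A₀ : Matrix (Fin a ⊕ Fin m) (Fin a ⊕ Fin m) k)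
    (C : Matrix (Fin m) (Fin a ⊕ Fin m) k) (D : Matrix (Fin m) (Fin m) k)
    (p : Matrix (Fin a) (Fin a) k) (q : Matrix (Fin a) (Fin m) k)
    (u : Matrix (Fin m) (Fin a) k) (v : Matrix (Fin m) (Fin m) k) :
    fromBlocks A₀ 0 C D * up p q u v =
      fromBlocks (A₀ * fromBlocks p q 0 0) (A₀ * (fromRows 0 1 : Matrix (Fin a ⊕ Fin m) (Fin m) k))
        (C * (fromBlocks p q 0 0 : Matrix (Fin a ⊕ Fin m) (Fin a ⊕ Fin m) k) + D * fromCols u v) (C * (fromRows 0 1 : Matrix (Fin a ⊕ Fin m) (Fin m) k)) := by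
  rw [up, Matrix.fromBlocks_multiply]
  simp

/-- right multiplication of the normal form: the generic computation -/
lemma up_mul_right (A₀ : Matrix (Fin a ⊕ Fin m) (Fin a ⊕ Fin m) k)
    (C2 : Matrix (Fin m) (Fin a ⊕ Fin m) k) (D : Matrix (Fin m) (Fin m) k)
    (p : Matrix (Fin a) (Fin a) k) (q : Matrix (Fin a) (Fin m) k)
    (u : Matrix (Fin m) (Fin a) k) (v : Matrix (Fin m) (Fin m) k) :
    up p q u v * fromBlocks A₀ 0 C2 D =
      fromBlocks (fromBlocks p q 0 0 * A₀ + (fromRows 0 1 : Matrix (Fin a ⊕ Fin m) (Fin m) k) * C2) ((fromRows 0 1 : Matrix (Fin a ⊕ Fin m) (Fin m) k) * D)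
        (fromCols u v * A₀) 0 := by
  rw [up, Matrix.fromBlocks_multiply]
  simp

lemma up_brk_iff (p : Matrix (Fin a) (Fin a) k) (q : Matrix (Fin a) (Fin m) k)
    (u : Matrix (Fin m) (Fin a) k) (v : Matrix (Fin m) (Fin m) k) :
    Brk (cβ (Fin a ⊕ Fin m) (Fin m)) (up p q u v) ↔
      Brk (cβ (Fin a) (Fin m)) (fromBlocks p q u v) := by
  constructor
  · rintro ⟨hu, hend⟩
    refine ⟨(isUnit_up_iff p q u v).mp hu, ?_⟩
    intro T1 T2 hadm heq
    obtain ⟨α, c, c', d, rfl, rfl⟩ := adm_cβ_decomp hadm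
    rw [Matrix.fromBlocks_multiply, Matrix.fromBlocks_multiply] at heq
    simp only [Matrix.zero_mul, Matrix.mul_zero, add_zero, zero_add] at heq
    rw [Matrix.fromBlocks_inj] at heq
    obtain ⟨e1, e2, e3, e4⟩ := heq
    -- build the endomorphism pair of `up p q u v`
    have heqUp : fromBlocks (fromBlocks α 0 c' d) 0 (fromCols c 0) d * up p q u v =
        up p q u v * fromBlocks (fromBlocks α 0 c' d) 0 (fromCols (c'*p) (c'*q)) d := by
      rw [up_mul_left, up_mul_right, blocksMulZ, mulQ0, colsMulBlocksZ, colsMulQ0,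
        Matrix.mul_fromCols, fromCols_add, zMulBlocks, q0MulCols, q0Mul,
        colsMulBlocks, Matrix.fromBlocks_add]
      simp only [Matrix.mul_zero, Matrix.zero_mul, add_zero, zero_add]
      rw [e1, e2, e3, e4]
    obtain ⟨cc, hc1, hc2⟩ := hend _ _ (adm_cβ _ _ _ _) heqUp
    rw [smul_one_blocks, Matrix.fromBlocks_inj] at hc1 hc2
    obtain ⟨hA1, -, hC1, hd1⟩ := hc1
    obtain ⟨-, -, hC2, -⟩ := hc2
    rw [smul_one_blocks, Matrix.fromBlocks_inj] at hA1
    obtain ⟨hα, -, hc', hd⟩ := hA1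
    rw [zero_as_fromCols] at hC1
    obtain ⟨hc, -⟩ := Matrix.fromCols_inj hC1
    refine ⟨cc, ?_, ?_⟩
    · rw [hα, hc, hd, smul_one_blocks]
    · rw [hα, hc', hd, smul_one_blocks]
  · rintro ⟨hu, hend⟩
    refine ⟨(isUnit_up_iff p q u v).mpr hu, ?_⟩
    intro S S' hadm heq
    obtain ⟨A₀, C, C2, D, rfl, rfl⟩ := adm_cβ_decomp hadm
    obtain ⟨a₁, a₂, a₃, a₄, rfl⟩ : ∃ a₁ a₂ a₃ a₄, A₀ = fromBlocks a₁ a₂ a₃ a₄ :=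
      ⟨A₀.toBlocks₁₁, A₀.toBlocks₁₂, A₀.toBlocks₂₁, A₀.toBlocks₂₂,
        (Matrix.fromBlocks_toBlocks A₀).symm⟩
    obtain ⟨c₁, c₂, rfl⟩ : ∃ c₁ c₂, C = fromCols c₁ c₂ :=
      ⟨C.toCols₁, C.toCols₂, (Matrix.fromCols_toCols C).symm⟩
    obtain ⟨g₁, g₂, rfl⟩ : ∃ g₁ g₂, C2 = fromCols g₁ g₂ :=
      ⟨C2.toCols₁, C2.toCols₂, (Matrix.fromCols_toCols C2).symm⟩
    rw [up_mul_left, up_mul_right, blocksMulZ, mulQ0, colsMulBlocksZ, colsMulQ0,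
      Matrix.mul_fromCols, fromCols_add, zMulBlocks, q0MulCols, q0Mul,
      colsMulBlocks, Matrix.fromBlocks_add] at heq
    simp only [Matrix.mul_zero, add_zero, zero_add, Matrix.zero_mul] at heq
    rw [Matrix.fromBlocks_inj] at heq
    obtain ⟨hTL, hTR, hBL, hBR⟩ := heq
    rw [Matrix.fromBlocks_inj] at hTL
    obtain ⟨E1, E2, E3, E4⟩ := hTL
    obtain ⟨E5, E6⟩ := Matrix.fromRows_inj hTR
    obtain ⟨E7, E8⟩ := Matrix.fromCols_inj hBL
    subst E5 E6 hBR
    simp only [Matrix.mul_zero, Matrix.zero_mul, add_zero, zero_add] at E1 E2 E3 E4 E7 E8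
    -- reduced endomorphism pair
    have heqRed : fromBlocks a₁ 0 c₁ a₄ * fromBlocks p q u v =
        fromBlocks p q u v * fromBlocks a₁ 0 a₃ a₄ := by
      rw [Matrix.fromBlocks_multiply, Matrix.fromBlocks_multiply]
      simp only [Matrix.zero_mul, Matrix.mul_zero, add_zero, zero_add]
      rw [E1, E2, E7, E8]
    obtain ⟨cc, hc1, hc2⟩ := hend _ _ (adm_cβ _ _ _ _) heqRed
    rw [smul_one_blocks, Matrix.fromBlocks_inj] at hc1 hc2
    obtain ⟨ha₁, -, hc₁, hD⟩ := hc1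
    obtain ⟨-, -, ha₃, -⟩ := hc2
    subst ha₁ hc₁ hD ha₃
    refine ⟨cc, ?_, ?_⟩
    · rw [smul_one_blocks (n₁ := (Fin a ⊕ Fin m)) (n₂ := Fin m), ← smul_one_blocks,
        zero_as_fromCols (n₁ := Fin a) (n₂ := Fin m)]
    · have hg₁ : g₁ = 0 := by rw [← E3, Matrix.zero_mul]
      have hg₂ : g₂ = 0 := by rw [← E4, Matrix.zero_mul]
      subst hg₁ hg₂
      rw [smul_one_blocks (n₁ := (Fin a ⊕ Fin m)) (n₂ := Fin m), ← smul_one_blocks,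
        zero_as_fromCols (n₁ := Fin a) (n₂ := Fin m)]

lemma up_eqv (p : Matrix (Fin a) (Fin a) k) (q : Matrix (Fin a) (Fin m) k)
    (u : Matrix (Fin m) (Fin a) k) (v : Matrix (Fin m) (Fin m) k)
    (p' : Matrix (Fin a) (Fin a) k) (q' : Matrix (Fin a) (Fin m) k)
    (u' : Matrix (Fin m) (Fin a) k) (v' : Matrix (Fin m) (Fin m) k)
    (h : Eqv (cβ (Fin a) (Fin m)) (fromBlocks p q u v) (fromBlocks p' q' u' v')) :
    Eqv (cβ (Fin a ⊕ Fin m) (Fin m)) ((up p q u v : Matrix _ _ k)) (up p' q' u' v') := by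
  obtain ⟨T1, T2, hadm, hu1, hu2, heq⟩ := h
  obtain ⟨α, c, c', d, rfl, rfl⟩ := adm_cβ_decomp hadm
  rw [isUnit_fromBlocks_zero₁₂] at hu1 hu2
  rw [Matrix.fromBlocks_multiply, Matrix.fromBlocks_multiply] at heq
  simp only [Matrix.zero_mul, Matrix.mul_zero, add_zero, zero_add] at heq
  rw [Matrix.fromBlocks_inj] at heq
  obtain ⟨e1, e2, e3, e4⟩ := heq
  refine ⟨fromBlocks (fromBlocks α 0 c' d) 0 (fromCols c 0) d,
    fromBlocks (fromBlocks α 0 c' d) 0 (fromCols (c'*p) (c'*q)) d,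
    adm_cβ _ _ _ _, ?_, ?_, ?_⟩
  · rw [isUnit_fromBlocks_zero₁₂, isUnit_fromBlocks_zero₁₂]
    exact ⟨⟨hu1.1, hu1.2⟩, hu1.2⟩
  · rw [isUnit_fromBlocks_zero₁₂, isUnit_fromBlocks_zero₁₂]
    exact ⟨⟨hu2.1, hu2.2⟩, hu2.2⟩
  · rw [up_mul_left, up_mul_right, blocksMulZ, mulQ0, colsMulBlocksZ, colsMulQ0,
      Matrix.mul_fromCols, fromCols_add, zMulBlocks, q0MulCols, q0Mul,
      colsMulBlocks, Matrix.fromBlocks_add]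
    simp only [Matrix.mul_zero, Matrix.zero_mul, add_zero, zero_add]
    rw [e1, e2, e3, e4]

end UpBrick



section Normalize
variable {a m : ℕ}

lemma q0_inj : Function.Injective
    ((fromRows 0 1 : Matrix (Fin a ⊕ Fin m) (Fin m) k)).mulVec := by
  intro x y h
  have := congrFun h
  funext j
  have hj := this (Sum.inr j)
  simpa [Matrix.fromRows_mulVec] using hj

lemma brick_Q_inj {M : Matrix ((Fin a ⊕ Fin m) ⊕ Fin m) ((Fin a ⊕ Fin m) ⊕ Fin m) k}
    (hb : Brk (cβ (Fin a ⊕ Fin m) (Fin m)) M) :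
    Function.Injective (M.toBlocks₁₂).mulVec := by
  classical
  set Q := M.toBlocks₁₂ with hQ
  by_contra hni
  -- a nonzero kernel vector
  obtain ⟨x₁, hx₁ne, hx₁⟩ : ∃ x₁ : Fin m → k, x₁ ≠ 0 ∧ Q *ᵥ x₁ = 0 := by
    rw [Function.not_injective_iff] at hni
    obtain ⟨x, y, hxy, hne⟩ := hni
    refine ⟨x - y, sub_ne_zero.mpr hne, ?_⟩
    rw [Matrix.mulVec_sub, hxy, sub_self]
  by_cases hy : ∃ y₀ : (Fin a ⊕ Fin m) → k, y₀ ≠ 0 ∧ y₀ ᵥ* Q = 0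
  · obtain ⟨y₀, hy₀ne, hy₀⟩ := hy
    apply brk_no_xy hb (Sum.elim 0 x₁) (Sum.elim y₀ 0)
    · intro h
      apply hx₁ne
      funext i
      exact congrFun h (Sum.inr i)
    · intro h
      apply hy₀ne
      funext i
      exact congrFun h (Sum.inl i)
    · rintro (i|i) hi
      · rfl
      · simp [cβ] at hi
    · rintro (i|i) hi
      · simp [cβ] at hi
      · rfl
    · rintro (i|i) hi
      · rw [← Matrix.fromBlocks_toBlocks M, Matrix.fromBlocks_mulVec]
        simp [← hQ, hx₁]
      · simp [cβ] at hi
    · rintro (i|i) hi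
      · simp [cβ] at hi
      · rw [← Matrix.fromBlocks_toBlocks M, Matrix.vecMul_fromBlocks]
        simp [← hQ, hy₀]
  · -- rows of Q span everything; then Q is injective after all
    push_neg at hy
    apply hni
    -- the linear map y ↦ y ᵥ* Q is injective
    set L : ((Fin a ⊕ Fin m) → k) →ₗ[k] (Fin m → k) := (Qᵀ).mulVecLin with hL
    have hLy : ∀ y, L y = y ᵥ* Q := by
      intro y
      rw [hL, Matrix.mulVecLin_apply, ← Matrix.vecMul_transpose]
      simp
    have hLinj : Function.Injective L := by
      intro y y' h
      have h2 : (y - y') ᵥ* Q = 0 := by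
        rw [← hLy, map_sub, h, sub_self]
      by_contra hne
      exact hy (y - y') (sub_ne_zero.mpr hne) h2
    have hsurj : Function.Surjective L := by
      rw [← LinearMap.range_eq_top]
      apply Submodule.eq_top_of_finrank_eq
      rw [LinearMap.finrank_range_of_inj hLinj]
      simp only [Module.finrank_pi]
      have hle : Fintype.card (Fin a ⊕ Fin m) ≤ Fintype.card (Fin m) := by
        have := LinearMap.finrank_le_finrank_of_injective hLinj
        simpa [Module.finrank_pi] using this
      have hge : Fintype.card (Fin m) ≤ Fintype.card (Fin a ⊕ Fin m) := by
        simp [Fintype.card_sum]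
      omega
    intro x y hxy
    funext j
    obtain ⟨z, hz⟩ := hsurj (Pi.single j 1)
    rw [hLy] at hz
    have h1 : (z ᵥ* Q) ⬝ᵥ x = (z ᵥ* Q) ⬝ᵥ y := by
      rw [← Matrix.dotProduct_mulVec, ← Matrix.dotProduct_mulVec, hxy]
    rw [hz] at h1
    simpa [dotProduct, Pi.single_apply] using h1

lemma one_as_fromBlocks {n₁ n₂ : Type*} [Fintype n₁] [DecidableEq n₁] [Fintype n₂]
    [DecidableEq n₂] : (1 : Matrix (n₁ ⊕ n₂) (n₁ ⊕ n₂) k) = fromBlocks 1 0 0 1 :=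
  Matrix.fromBlocks_one.symm

lemma move1 (P : Matrix (Fin a ⊕ Fin m) (Fin a ⊕ Fin m) k) (Q : Matrix (Fin a ⊕ Fin m) (Fin m) k)
    (R : Matrix (Fin m) (Fin a ⊕ Fin m) k) (T : Matrix (Fin m) (Fin m) k)
    (A₁ : Matrix (Fin a ⊕ Fin m) (Fin a ⊕ Fin m) k) (hA₁u : IsUnit A₁) :
    Eqv (cβ (Fin a ⊕ Fin m) (Fin m)) (fromBlocks P Q R T)
      (fromBlocks (A₁ * P * A₁⁻¹) (A₁ * Q) (R * A₁⁻¹) T) := by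
  have hA₁d : IsUnit A₁.det := (Matrix.isUnit_iff_isUnit_det A₁).mp hA₁u
  refine ⟨fromBlocks A₁ 0 0 1, fromBlocks A₁ 0 0 1, adm_cβ _ _ _ _, ?_, ?_, ?_⟩
  · exact isUnit_fromBlocks_zero₁₂.mpr ⟨hA₁u, isUnit_one⟩
  · exact isUnit_fromBlocks_zero₁₂.mpr ⟨hA₁u, isUnit_one⟩
  · rw [Matrix.fromBlocks_multiply, Matrix.fromBlocks_multiply]
    simp only [Matrix.zero_mul, Matrix.mul_zero, add_zero, zero_add,
      Matrix.one_mul, Matrix.mul_one]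
    rw [Matrix.mul_assoc (A₁ * P), Matrix.mul_assoc R,
      Matrix.nonsing_inv_mul _ hA₁d, Matrix.mul_one, Matrix.mul_one]

lemma move2 (P₁ : Matrix (Fin a ⊕ Fin m) (Fin a ⊕ Fin m) k)
    (R₁ : Matrix (Fin m) (Fin a ⊕ Fin m) k) (T : Matrix (Fin m) (Fin m) k) :
    Eqv (cβ (Fin a ⊕ Fin m) (Fin m)) (fromBlocks P₁ (fromRows 0 1) R₁ T)
      (fromBlocks P₁ (fromRows 0 1) ((fromCols 0 (-T) : Matrix (Fin m) (Fin a ⊕ Fin m) k) * P₁ + R₁) 0) := by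
  refine ⟨fromBlocks 1 0 (fromCols 0 (-T)) 1, 1, ?_, ?_, isUnit_one, ?_⟩
  · rw [one_as_fromBlocks (k := k) (n₁ := Fin a ⊕ Fin m) (n₂ := Fin m)]
    exact adm_cβ _ _ _ _
  · exact isUnit_fromBlocks_zero₁₂.mpr ⟨isUnit_one, isUnit_one⟩
  · rw [Matrix.mul_one, Matrix.fromBlocks_multiply]
    simp only [Matrix.zero_mul, Matrix.mul_zero, add_zero, zero_add,
      Matrix.one_mul, Matrix.mul_one]
    rw [colsMulQ0, neg_add_cancel]

lemma move3 (P₂ : Matrix (Fin a ⊕ Fin m) (Fin a ⊕ Fin m) k)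
    (R₂ : Matrix (Fin m) (Fin a ⊕ Fin m) k) :
    Eqv (cβ (Fin a ⊕ Fin m) (Fin m)) (fromBlocks P₂ (fromRows 0 1) R₂ 0)
      (up (P₂.toBlocks₁₁) (P₂.toBlocks₁₂) (R₂.toCols₁) (R₂.toCols₂)) := by
  refine ⟨1, fromBlocks 1 0 (fromCols (P₂.toBlocks₂₁) (P₂.toBlocks₂₂)) 1, ?_,
    isUnit_one, ?_, ?_⟩
  · rw [one_as_fromBlocks (k := k) (n₁ := Fin a ⊕ Fin m) (n₂ := Fin m)]
    exact adm_cβ _ _ _ _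
  · exact isUnit_fromBlocks_zero₁₂.mpr ⟨isUnit_one, isUnit_one⟩
  · rw [Matrix.one_mul, up, Matrix.fromBlocks_multiply]
    simp only [Matrix.zero_mul, Matrix.mul_zero, add_zero, zero_add,
      Matrix.one_mul, Matrix.mul_one]
    rw [q0MulCols, Matrix.fromBlocks_add]
    simp only [add_zero, zero_add]
    rw [Matrix.fromBlocks_toBlocks, Matrix.fromCols_toCols]

lemma normalize {M : Matrix ((Fin a ⊕ Fin m) ⊕ Fin m) ((Fin a ⊕ Fin m) ⊕ Fin m) k}
    (hb : Brk (cβ (Fin a ⊕ Fin m) (Fin m)) M) :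
    ∃ p q u v, Eqv (cβ (Fin a ⊕ Fin m) (Fin m)) M (up p q u v) := by
  classical
  obtain ⟨P, Q, R, T, rfl⟩ : ∃ P Q R T, M = fromBlocks P Q R T :=
    ⟨M.toBlocks₁₁, M.toBlocks₁₂, M.toBlocks₂₁, M.toBlocks₂₂,
      (Matrix.fromBlocks_toBlocks M).symm⟩
  have hQinj : Function.Injective Q.mulVec := by
    have := brick_Q_inj hb
    simpa [Matrix.toBlocks_fromBlocks₁₂] using this
  obtain ⟨A₁, hA₁u, hA₁Q⟩ := exists_unit_mul_eq_of_inj Q (fromRows 0 1) hQinj q0_inj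
  have h1 := move1 P Q R T A₁ hA₁u
  rw [hA₁Q] at h1
  have h2 := move2 (A₁ * P * A₁⁻¹) (R * A₁⁻¹) T
  have h3 := move3 (A₁ * P * A₁⁻¹) (fromCols 0 (-T) * (A₁ * P * A₁⁻¹) + R * A₁⁻¹)
  exact ⟨_, _, _, _, (h1.trans h2).trans h3⟩

end Normalize



section StmtReduce
variable {a m : ℕ}

lemma stmt_reduce (h : Stmt k (cβ (Fin a) (Fin m))) :
    Stmt k (cβ (Fin a ⊕ Fin m) (Fin m)) := by
  obtain ⟨h1, h2⟩ := h
  rw [sb_cβ0, sb_cβ1] at h1 h2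
  simp only [Fintype.card_fin] at h1 h2
  have hgcd_eq : Nat.gcd (sb (cβ (Fin a ⊕ Fin m) (Fin m)) 0) (sb (cβ (Fin a ⊕ Fin m) (Fin m)) 1)
      = Nat.gcd a m := by
    rw [sb_cβ0, sb_cβ1]
    simp only [Fintype.card_sum, Fintype.card_fin]
    exact Nat.gcd_add_self_left m a
  constructor
  · rw [hgcd_eq, ← h1]
    constructor
    · rintro ⟨M, hM⟩
      obtain ⟨p, q, u, v, he⟩ := normalize hM
      exact ⟨fromBlocks p q u v, (up_brk_iff p q u v).mp (Brk.of_eqv he hM)⟩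
    · rintro ⟨N, hN⟩
      obtain ⟨p, q, u, v, rfl⟩ : ∃ p q u v, N = fromBlocks p q u v :=
        ⟨N.toBlocks₁₁, N.toBlocks₁₂, N.toBlocks₂₁, N.toBlocks₂₂,
          (Matrix.fromBlocks_toBlocks N).symm⟩
      exact ⟨up p q u v, (up_brk_iff p q u v).mpr hN⟩
  · intro hgcd
    rw [hgcd_eq] at hgcd
    obtain ⟨h3, h4⟩ := h2 hgcd
    constructor
    · intro M M' hM hM' hdet
      obtain ⟨p, q, u, v, he⟩ := normalize hM
      obtain ⟨p', q', u', v', he'⟩ := normalize hM'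
      have hb1 := (up_brk_iff p q u v).mp (Brk.of_eqv he hM)
      have hb2 := (up_brk_iff p' q' u' v').mp (Brk.of_eqv he' hM')
      have hdet2 : (fromBlocks p q u v).det = (fromBlocks p' q' u' v').det := by
        have d1 := he.det_eq
        have d2 := he'.det_eq
        rw [det_up] at d1 d2
        apply mul_left_cancel₀ (eps_ne_zero (a := a) (m := m) (k := k))
        rw [← d1, ← d2, hdet]
      have hupEq := up_eqv p q u v p' q' u' v' (h3 _ _ hb1 hb2 hdet2)
      exact (he.trans hupEq).trans he'.symm
    · intro c hc
      have hc' : (eps a m : k) * c ≠ 0 :=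
        mul_ne_zero (eps_ne_zero (a := a) (m := m) (k := k)) hc
      obtain ⟨N, hN, hdN⟩ := h4 _ hc'
      obtain ⟨p, q, u, v, rfl⟩ : ∃ p q u v, N = fromBlocks p q u v :=
        ⟨N.toBlocks₁₁, N.toBlocks₁₂, N.toBlocks₂₁, N.toBlocks₂₂,
          (Matrix.fromBlocks_toBlocks N).symm⟩
      refine ⟨up p q u v, (up_brk_iff p q u v).mpr hN, ?_⟩
      rw [det_up, hdN, ← mul_assoc, eps_sq_k, one_mul]

end StmtReduce

section Flip
variable {ι : Type*} [Fintype ι] [DecidableEq ι]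

def flipb : Fin 2 → Fin 2 := fun b => if b = 0 then 1 else 0

def flipβ (β : ι → Fin 2) : ι → Fin 2 := fun i => flipb (β i)

lemma flipβ_flipβ (β : ι → Fin 2) : flipβ (flipβ β) = β := by
  funext i
  show flipb (flipb (β i)) = β i
  revert i
  intro i
  have : ∀ b : Fin 2, flipb (flipb b) = b := by decide
  exact this (β i)

lemma flipb_lt {b c : Fin 2} : flipb c < flipb b ↔ b < c := by revert b c; decide

lemma flipb_eq {b c : Fin 2} : flipb b = flipb c ↔ b = c := by revert b c; decide

lemma adm_flip {β : ι → Fin 2} {S S' : Matrix ι ι k} (h : Adm β S S') :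
    Adm (flipβ β) S'ᵀ Sᵀ := by
  obtain ⟨z, q⟩ := h
  constructor
  · intro i j hij
    have hji : β j < β i := flipb_lt.mp hij
    exact ⟨(z j i hji).2, (z j i hji).1⟩
  · intro i j hij
    have hji : β j = β i := (flipb_eq.mp hij).symm
    exact (q j i hji).symm

lemma isUnit_transpose {M : Matrix ι ι k} : IsUnit Mᵀ ↔ IsUnit M := by
  rw [Matrix.isUnit_iff_isUnit_det, Matrix.isUnit_iff_isUnit_det M, Matrix.det_transpose]

lemma smul_one_transpose (c : k) : (c • (1 : Matrix ι ι k))ᵀ = c • 1 := by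
  rw [Matrix.transpose_smul, Matrix.transpose_one]

lemma brk_flip {β : ι → Fin 2} {M : Matrix ι ι k} (h : Brk β M) : Brk (flipβ β) Mᵀ := by
  obtain ⟨hu, hend⟩ := h
  refine ⟨isUnit_transpose.mpr hu, ?_⟩
  intro S S' hadm heq
  have hadm' : Adm β S'ᵀ Sᵀ := by
    have := adm_flip (k := k) hadm
    rwa [flipβ_flipβ] at this
  have heq' : S'ᵀ * M = M * Sᵀ := by
    have := congrArg Matrix.transpose heq
    rw [Matrix.transpose_mul, Matrix.transpose_mul, Matrix.transpose_transpose] at this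
    exact this.symm
  obtain ⟨c, hc1, hc2⟩ := hend _ _ hadm' heq'
  refine ⟨c, ?_, ?_⟩
  · have := congrArg Matrix.transpose hc2
    rwa [Matrix.transpose_transpose, smul_one_transpose] at this
  · have := congrArg Matrix.transpose hc1
    rwa [Matrix.transpose_transpose, smul_one_transpose] at this

lemma eqv_flip {β : ι → Fin 2} {M M' : Matrix ι ι k} (h : Eqv β M M') :
    Eqv (flipβ β) M'ᵀ Mᵀ := by
  obtain ⟨S, S', hadm, hS, hS', heq⟩ := h
  refine ⟨S'ᵀ, Sᵀ, adm_flip hadm, isUnit_transpose.mpr hS', isUnit_transpose.mpr hS, ?_⟩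
  have := congrArg Matrix.transpose heq
  rw [Matrix.transpose_mul, Matrix.transpose_mul] at this
  exact this.symm

lemma sb_flip (β : ι → Fin 2) : sb (flipβ β) 0 = sb β 1 ∧ sb (flipβ β) 1 = sb β 0 := by
  constructor <;>
  · unfold sb
    apply Finset.card_bij (fun i _ => i) <;> intros <;>
      simp_all [flipβ, flipb] <;> omega

lemma stmt_flip {β : ι → Fin 2} (h : Stmt k (flipβ β)) : Stmt k β := by
  obtain ⟨hf0, hf1⟩ := sb_flip β
  obtain ⟨h1, h2⟩ := h
  rw [hf0, hf1, Nat.gcd_comm] at h1 h2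
  constructor
  · rw [← h1]
    constructor
    · rintro ⟨M, hM⟩
      exact ⟨Mᵀ, brk_flip hM⟩
    · rintro ⟨M, hM⟩
      refine ⟨Mᵀ, ?_⟩
      have := brk_flip (k := k) hM
      rwa [flipβ_flipβ] at this
  · intro hgcd
    obtain ⟨h3, h4⟩ := h2 hgcd
    constructor
    · intro M M' hM hM' hdet
      have he := h3 Mᵀ M'ᵀ (brk_flip hM) (brk_flip hM')
        (by rw [Matrix.det_transpose, Matrix.det_transpose]; exact hdet)
      have := eqv_flip (k := k) he
      rw [flipβ_flipβ, Matrix.transpose_transpose, Matrix.transpose_transpose] at this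
      exact this.symm
    · intro c hc
      obtain ⟨N, hN, hdN⟩ := h4 c hc
      refine ⟨Nᵀ, ?_, ?_⟩
      · have := brk_flip (k := k) hN
        rwa [flipβ_flipβ] at this
      · rw [Matrix.det_transpose]
        exact hdN

end Flip

section Main
variable {ι : Type*} [Fintype ι] [DecidableEq ι]

lemma sb_add (β : ι → Fin 2) : sb β 0 + sb β 1 = Fintype.card ι := by
  unfold sb
  have h := Finset.card_filter_add_card_filter_not (s := (Finset.univ : Finset ι))
    (p := fun i => β i = 0)
  have h2 : (Finset.univ.filter fun i => ¬ β i = 0) = Finset.univ.filter fun i => β i = 1 := by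
    apply Finset.filter_congr
    intro i _
    constructor
    · exact fun hh => fin2_ne0 hh
    · intro hh
      rw [hh]
      decide
  rw [h2] at h
  rw [h, Finset.card_univ]

/-- given `sb β 1 ≤ sb β 0` and both nonzero, transport from the canonical reduced problem -/
lemma stmt_canon (β : ι → Fin 2) (hle : sb β 1 ≤ sb β 0)
    (h : Stmt k (cβ (Fin (sb β 0 - sb β 1) ⊕ Fin (sb β 1)) (Fin (sb β 1)))) : Stmt k β := by
  classical
  have hcard0 : Fintype.card {i // β i = 0} = sb β 0 := by
    rw [Fintype.card_subtype]
    rfl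
  have hcard1 : Fintype.card {i // ¬ β i = 0} = sb β 1 := by
    rw [Fintype.card_subtype]
    unfold sb
    congr 1
    apply Finset.filter_congr
    intro i _
    constructor
    · exact fin2_ne0
    · intro h2
      rw [h2]
      decide
  have e0 : {i // β i = 0} ≃ (Fin (sb β 0 - sb β 1) ⊕ Fin (sb β 1)) := by
    apply Fintype.equivOfCardEq
    simp [hcard0, Fintype.card_sum]
    omega
  have e1 : {i // ¬ β i = 0} ≃ Fin (sb β 1) := by
    apply Fintype.equivOfCardEq
    simp [hcard1]
  let e : ι ≃ (Fin (sb β 0 - sb β 1) ⊕ Fin (sb β 1)) ⊕ Fin (sb β 1) :=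
    (Equiv.sumCompl (fun i => β i = 0)).symm.trans (e0.sumCongr e1)
  apply stmt_reindex e _ h
  intro i
  by_cases hi : β i = 0
  · have : e i = Sum.inl (e0 ⟨i, hi⟩) := by
      show Sum.map (⇑e0) (⇑e1) ((Equiv.sumCompl fun i => β i = 0).symm i) = Sum.inl (e0 ⟨i, hi⟩)
      rw [Equiv.sumCompl_symm_apply_of_pos (p := fun j => β j = 0) hi]
      rfl
    rw [this, hi]
    rfl
  · have : e i = Sum.inr (e1 ⟨i, hi⟩) := by
      show Sum.map (⇑e0) (⇑e1) ((Equiv.sumCompl fun i => β i = 0).symm i) = Sum.inr (e1 ⟨i, hi⟩)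
      rw [Equiv.sumCompl_symm_apply_of_neg (p := fun j => β j = 0) hi]
      rfl
    rw [this, fin2_ne0 hi]
    rfl

end Main



theorem stmt_all (k : Type*) [Field k] :
    ∀ n : ℕ, ∀ (ι : Type) (_ : Fintype ι) (_ : DecidableEq ι) (β : ι → Fin 2),
      Fintype.card ι = n → 1 ≤ n → Stmt k β := by
  intro n
  induction n using Nat.strong_induction_on with
  | _ n IH =>
    intro ι instF instD β hcard hn
    have hne : Nonempty ι := by
      rw [← Fintype.card_pos_iff]
      omega
    have hadd := sb_add β
    by_cases h1 : sb β 1 = 0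
    · apply stmt_const β 0
      intro i
      by_contra hne0
      have hb1 : β i = 1 := fin2_ne0 hne0
      have hmem : i ∈ Finset.univ.filter (fun j => β j = 1) := by simp [hb1]
      have := Finset.card_pos.mpr ⟨i, hmem⟩
      unfold sb at h1
      omega
    by_cases h0 : sb β 0 = 0
    · apply stmt_const β 1
      intro i
      rcases fin2_cases (β i) with h | h
      · exfalso
        have hmem : i ∈ Finset.univ.filter (fun j => β j = 0) := by simp [h]
        have := Finset.card_pos.mpr ⟨i, hmem⟩
        unfold sb at h0
        omega
      · exact h
    have key : ∀ (γ : ι → Fin 2), sb γ 1 ≤ sb γ 0 → 1 ≤ sb γ 1 → Stmt k γ := by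
      intro γ hle hγ1
      have haddγ := sb_add γ
      apply stmt_canon γ hle
      apply stmt_reduce
      refine IH (sb γ 0) (by omega) (Fin (sb γ 0 - sb γ 1) ⊕ Fin (sb γ 1)) _ _ _ ?_ (by omega)
      simp only [Fintype.card_sum, Fintype.card_fin]
      omega
    by_cases hle : sb β 1 ≤ sb β 0
    · exact key β hle (by omega)
    · apply stmt_flip
      obtain ⟨hf0, hf1⟩ := sb_flip β
      apply key (flipβ β)
      · rw [hf0, hf1]
        omega
      · rw [hf1]
        omega


end NodalAux

/-- A pair `(S, S')` of `r × r` matrices is admissible for the nodal matrix problem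
with block function `β : Fin r → Fin 2` if both are block lower triangular and their
diagonal blocks coincide. -/
def NodalAdmissiblePair {k : Type*} [Field k] {r : ℕ} (β : Fin r → Fin 2)
    (S S' : Matrix (Fin r) (Fin r) k) : Prop :=
  (∀ i j, β i < β j → S i j = 0 ∧ S' i j = 0) ∧
  (∀ i j, β i = β j → S i j = S' i j)

/-- A brick for the nodal matrix problem: an invertible matrix whose only
endomorphisms are scalar. -/
def NodalBrick {k : Type*} [Field k] {r : ℕ} (β : Fin r → Fin 2)
    (M : Matrix (Fin r) (Fin r) k) : Prop :=
  IsUnit M ∧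
    ∀ S S' : Matrix (Fin r) (Fin r) k, NodalAdmissiblePair β S S' → S * M = M * S' →
      ∃ c : k, S = c • (1 : Matrix (Fin r) (Fin r) k) ∧
        S' = c • (1 : Matrix (Fin r) (Fin r) k)

/-- Equivalence of bricks for the nodal matrix problem. -/
def NodalEquiv {k : Type*} [Field k] {r : ℕ} (β : Fin r → Fin 2)
    (M M' : Matrix (Fin r) (Fin r) k) : Prop :=
  ∃ S S' : Matrix (Fin r) (Fin r) k,
    NodalAdmissiblePair β S S' ∧ IsUnit S ∧ IsUnit S' ∧ S * M = M' * S'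

/-- Classification of bricks for the nodal matrix problem: bricks exist iff
`gcd(s₀,s₁) = 1`, and then the determinant induces a bijection from equivalence
classes of bricks onto `k ∖ {0}`. -/
theorem nodal_bricks_classification (k : Type*) [Field k] [IsAlgClosed k]
    (r : ℕ) (hr : 1 ≤ r) (β : Fin r → Fin 2) :
    ((∃ M : Matrix (Fin r) (Fin r) k, NodalBrick β M) ↔
      Nat.gcd (Finset.univ.filter fun i => β i = 0).card
        (Finset.univ.filter fun i => β i = 1).card = 1) ∧
    (Nat.gcd (Finset.univ.filter fun i => β i = 0).card
        (Finset.univ.filter fun i => β i = 1).card = 1 →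
      (∀ M M' : Matrix (Fin r) (Fin r) k, NodalBrick β M → NodalBrick β M' →
        NodalEquiv β M M' → M.det = M'.det) ∧
      (∀ M : Matrix (Fin r) (Fin r) k, NodalBrick β M → M.det ≠ 0) ∧
      (∀ M M' : Matrix (Fin r) (Fin r) k, NodalBrick β M → NodalBrick β M' →
        M.det = M'.det → NodalEquiv β M M') ∧
      (∀ c : k, c ≠ 0 → ∃ M : Matrix (Fin r) (Fin r) k, NodalBrick β M ∧ M.det = c)) := by
  classical
  obtain ⟨h1, h2⟩ := NodalAux.stmt_all k r (Fin r) inferInstance inferInstance β (by simp) hr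
  constructor
  · exact h1
  · intro hgcd
    obtain ⟨h3, h4⟩ := h2 hgcd
    refine ⟨?_, ?_, ?_, ?_⟩
    · intro M M' _ _ he
      exact NodalAux.Eqv.det_eq (β := β) he
    · intro M hM
      exact ((Matrix.isUnit_iff_isUnit_det M).mp hM.1).ne_zero
    · exact h3
    · exact h4
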